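/- For n odd, n = 2k+1, any interior lattice point of the dilate ((n+1)/2)·S_n equals J + P where J is the all-ones matrix and P is a symmetric permutation matrix; consequently the number of interior lattice points of ((n+1)/2)·S_n equals the number of involutions of {1,…,n}. -/

import Mathlib

open Matrix Finset

lemma permMatrix_apply_nat {n : ℕ} (σ : Equiv.Perm (Fin n)) (i j : Fin n) :
    σ.permMatrix ℕ i j = if σ i = j then 1 else 0 := by
  simp [Equiv.Perm.permMatrix, PEquiv.toMatrix_apply, Equiv.toPEquiv_apply]

lemma main_iff_aux (n k : ℕ) (hn : n = 2 * k + 1) (X : Matrix (Fin n) (Fin n) ℕ) :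
    (X.IsSymm ∧ (∀ i, ∑ j, X i j = 2 * (k + 1)) ∧ (∀ i j, 0 < X i j)) ↔
    (∃ σ : Equiv.Perm (Fin n), σ * σ = 1 ∧
      X = Matrix.of (fun _ _ => (1 : ℕ)) + σ.permMatrix ℕ) := by
  constructor
  · rintro ⟨hs, hrow, hpos⟩
    have key : ∀ i, ∃ j, X i j = 2 ∧ ∀ j', j' ≠ j → X i j' = 1 := by
      intro i
      set g : Fin n → ℕ := fun j => X i j - 1 with hgdef
      have hsum1 : ∑ j, X i j = ∑ j, (g j + 1) := by
        apply Finset.sum_congr rfl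
        intro j _
        have := hpos i j
        simp [hgdef]; omega
      have hg : ∑ j, g j = 1 := by
        have h2 : ∑ j, (g j + 1) = (∑ j, g j) + n := by
          rw [Finset.sum_add_distrib, Finset.sum_const, Finset.card_univ]
          simp
        have h3 := hrow i
        rw [hsum1, h2] at h3
        omega
      obtain ⟨j, hj⟩ : ∃ j, g j ≠ 0 := by
        by_contra h
        push_neg at h
        rw [Finset.sum_eq_zero (fun j _ => h j)] at hg
        exact absurd hg (by norm_num)
      have hsplit : g j + ∑ x ∈ univ.erase j, g x = ∑ x, g x :=
        Finset.add_sum_erase univ g (mem_univ j)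
      have hrest : ∑ x ∈ univ.erase j, g x = 0 := by omega
      have hzero := (Finset.sum_eq_zero_iff).mp hrest
      have hgj : g j = 1 := by omega
      refine ⟨j, ?_, ?_⟩
      · have := hpos i j; simp [hgdef] at hgj; omega
      · intro j' hne
        have h0 := hzero j' (Finset.mem_erase.mpr ⟨hne, mem_univ j'⟩)
        have := hpos i j'
        simp [hgdef] at h0; omega
    choose f hf2 hf1 using key
    have hsymm : ∀ i j, X j i = X i j := by
      intro i j
      have h := congrFun (congrFun hs j) i
      simp only [Matrix.transpose_apply] at h
      exact h.symm
    have hinv : Function.Involutive f := by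
      intro i
      have h1 : X (f i) i = 2 := by rw [hsymm i (f i)]; exact hf2 i
      by_contra h
      have h2 := hf1 (f i) i (fun hc => h hc.symm)
      omega
    refine ⟨hinv.toPerm f, ?_, ?_⟩
    · ext x
      simp [Equiv.Perm.mul_apply, Function.Involutive.coe_toPerm, hinv x]
    · funext i j
      simp only [Matrix.add_apply, Matrix.of_apply, permMatrix_apply_nat,
        Function.Involutive.coe_toPerm]
      by_cases h : f i = j
      · subst h; simp [hf2 i]
      · simp [if_neg h, hf1 i j (fun hc => h hc.symm)]
        split_ifs <;> simp_all
  · rintro ⟨σ, hσ, rfl⟩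
    have hinv : ∀ x, σ (σ x) = x := by
      intro x
      have h := DFunLike.congr_fun hσ x
      simpa [Equiv.Perm.mul_apply] using h
    refine ⟨?_, ?_, ?_⟩
    · ext i j
      simp only [Matrix.transpose_apply, Matrix.add_apply, Matrix.of_apply,
        permMatrix_apply_nat]
      congr 1
      by_cases h : σ i = j
      · have : σ j = i := by rw [← h, hinv]
        simp [h, this]
      · have h' : σ j ≠ i := fun hc => h (by rw [← hc, hinv])
        simp [h, h']
    · intro i
      have : ∑ j, ((Matrix.of (fun _ _ => (1 : ℕ)) + σ.permMatrix ℕ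
            : Matrix (Fin n) (Fin n) ℕ) i j)
          = ∑ j, ((1 : ℕ) + if σ i = j then 1 else 0) := by
        apply Finset.sum_congr rfl
        intro j _
        simp [permMatrix_apply_nat, Equiv.toPEquiv_apply]
      rw [this, Finset.sum_add_distrib, Finset.sum_const, Finset.card_univ,
        Finset.sum_ite_eq univ (σ i)]
      simp; omega
    · intro i j
      simp [permMatrix_apply_nat]

theorem interior_lattice_points_odd (n k : ℕ) (hn : n = 2 * k + 1) :
    (∀ X : Matrix (Fin n) (Fin n) ℕ,
      (X.IsSymm ∧ (∀ i, ∑ j, X i j = 2 * (k + 1)) ∧ (∀ i j, 0 < X i j)) ↔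
      (∃ σ : Equiv.Perm (Fin n), σ * σ = 1 ∧
        X = Matrix.of (fun _ _ => (1 : ℕ)) + σ.permMatrix ℕ)) ∧
    Nat.card {X : Matrix (Fin n) (Fin n) ℕ //
        X.IsSymm ∧ (∀ i, ∑ j, X i j = 2 * (k + 1)) ∧ (∀ i j, 0 < X i j)} =
      Nat.card {σ : Equiv.Perm (Fin n) // σ * σ = 1} := by
  refine ⟨fun X => main_iff_aux n k hn X, ?_⟩
  refine (Nat.card_congr (Equiv.ofBijective
    (fun σp : {σ : Equiv.Perm (Fin n) // σ * σ = 1} =>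
      (⟨Matrix.of (fun _ _ => (1 : ℕ)) + (σp.1).permMatrix ℕ,
        (main_iff_aux n k hn _).mpr ⟨σp.1, σp.2, rfl⟩⟩ :
        {X : Matrix (Fin n) (Fin n) ℕ //
          X.IsSymm ∧ (∀ i, ∑ j, X i j = 2 * (k + 1)) ∧ (∀ i j, 0 < X i j)}))
    ⟨?_, ?_⟩)).symm
  · rintro ⟨σ, hσ⟩ ⟨τ, hτ⟩ h
    have hM : (Matrix.of (fun _ _ => (1 : ℕ)) + σ.permMatrix ℕ
        : Matrix (Fin n) (Fin n) ℕ)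
        = Matrix.of (fun _ _ => (1 : ℕ)) + τ.permMatrix ℕ := congrArg Subtype.val h
    have hστ : ∀ i, σ i = τ i := by
      intro i
      have := congrFun (congrFun hM i) (σ i)
      simp only [Matrix.add_apply, Matrix.of_apply, permMatrix_apply_nat] at this
      by_contra hc
      simp [if_neg (fun hh : τ i = σ i => hc hh.symm)] at this
    exact Subtype.ext (Equiv.ext hστ)
  · rintro ⟨X, hX⟩
    obtain ⟨σ, hσ, hXeq⟩ := (main_iff_aux n k hn X).mp hX
    exact ⟨⟨σ, hσ⟩, Subtype.ext hXeq.symm⟩
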